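/- Let α be an involutive orthogonal linear map on (V,g) with +1 eigenspace V₀ and −1 eigenspace V₁. The map Γ_α : V → End(Λ(V)) given by Γ_α(v) = (v ∧ ·) + (α(v) ⌟ ·) satisfies (Γ_α(v))² = g_α(v,v)·id, where g_α(u,v) = g(u₀,v₀) − g(u₁,v₁) with uᵢ, vᵢ the projections onto Vᵢ. Hence Γ_α is a Clifford map for (V, g_α). -/

import Mathlib

open CliffordAlgebra

/-- Let `α` be an involutive `g`-orthogonal linear map on `V`, with `±1`-eigenspace
projections `v ↦ vᵢ`.  The map `Γ_α(v) = (v ∧ ·) + (α(v) ⌟ ·)` on the exterior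
algebra `Λ(V)` (realized as the Clifford algebra of the zero form, whose product is
the exterior product, with `⌟` the contraction by the covector `g(α(v), ·)`)
satisfies `(Γ_α(v))² = g_α(v,v) • id`, where `g_α(u,v) = g(u₀,v₀) - g(u₁,v₁)`.
Hence `Γ_α` is a Clifford map for `(V, g_α)`. -/
theorem deformed_clifford_map_squares_to_deformed_metric
    {V : Type*} [AddCommGroup V] [Module ℝ V] [FiniteDimensional ℝ V]
    (B : LinearMap.BilinForm ℝ V) (hsymm : B.IsSymm) (hnd : B.Nondegenerate)
    (α : V →ₗ[ℝ] V) (hinv : ∀ v, α (α v) = v)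
    (hiso : ∀ x y : V, B (α x) (α y) = B x y) (v : V)
    (Γv : CliffordAlgebra (0 : QuadraticForm ℝ V) →ₗ[ℝ]
      CliffordAlgebra (0 : QuadraticForm ℝ V))
    (hΓv : Γv = LinearMap.mulLeft ℝ (ι (0 : QuadraticForm ℝ V) v)
      + contractLeft (Q := (0 : QuadraticForm ℝ V)) (B (α v))) :
    ∀ x : CliffordAlgebra (0 : QuadraticForm ℝ V),
      Γv (Γv x)
      = (B ((1 / 2 : ℝ) • (v + α v)) ((1 / 2 : ℝ) • (v + α v))
          - B ((1 / 2 : ℝ) • (v - α v)) ((1 / 2 : ℝ) • (v - α v))) • x := by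
  intro x
  have hscal : (B ((1 / 2 : ℝ) • (v + α v)) ((1 / 2 : ℝ) • (v + α v))
      - B ((1 / 2 : ℝ) • (v - α v)) ((1 / 2 : ℝ) • (v - α v))) = B (α v) v := by
    have h1 : B (α v) (α v) = B v v := hiso v v
    have h2 : B v (α v) = B (α v) v := by
      have := hsymm.eq v (α v); simpa using this
    simp only [map_smul, LinearMap.smul_apply, map_add, map_sub, LinearMap.add_apply,
      LinearMap.sub_apply, smul_eq_mul, h1, h2]
    ring
  rw [hscal, hΓv]
  simp only [LinearMap.add_apply, LinearMap.mulLeft_apply, map_add]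
  rw [contractLeft_ι_mul]
  have hvv : ι (0 : QuadraticForm ℝ V) v * (ι (0 : QuadraticForm ℝ V) v * x) = 0 := by
    rw [← mul_assoc, ι_sq_scalar]
    simp
  have hcc : contractLeft (Q := (0 : QuadraticForm ℝ V)) (B (α v))
      (contractLeft (Q := (0 : QuadraticForm ℝ V)) (B (α v)) x) = 0 :=
    contractLeft_contractLeft _ _
  rw [hvv, hcc]
  abel
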